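/- Pauli type counting (Lemma 3.7). For X ∈ 𝒫 let 𝒮_X = {(P,Q) ∈ 𝒫_k × 𝒫_{k'} : [P,Q] = 2iX or [P,Q] = −2iX}, and define the type of (P,Q) ∈ 𝒮_X as the pair of integers (|supp(P)|, |supp(P) ∩ supp(Q)|). Then: (a) for every X ∈ 𝒫, the set of types occurring among elements of 𝒮_X has at most k² elements; (b) if (P,Q) and (P',Q') are both in 𝒮_X and have the same type, then supp(P) ∩ supp(Q') ≠ ∅. -/

import Mathlib

open Complex Matrix
open scoped BigOperators Classical

noncomputable section

/-- The space of `n`-qubit operators, as matrices indexed by bit-strings. -/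
abbrev QMat (n : ℕ) := Matrix (Fin n → Fin 2) (Fin n → Fin 2) ℂ

/-- The single-qubit Pauli matrices, indexed so that `0 = σ_I`, `1 = σ_x`, `2 = σ_y`,
`3 = σ_z`. -/
def pauli1 (a : Fin 4) : Matrix (Fin 2) (Fin 2) ℂ :=
  if a = 0 then 1
  else if a = 1 then !![0, 1; 1, 0]
  else if a = 2 then !![0, -Complex.I; Complex.I, 0]
  else !![1, 0; 0, -1]

/-- The `n`-qubit Pauli (Kronecker product of single-qubit Paulis) described by
`p : Fin n → Fin 4`. -/
def PauliOp {n : ℕ} (p : Fin n → Fin 4) : QMat n :=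
  Matrix.of fun x y => ∏ i, pauli1 (p i) (x i) (y i)

/-- The support of a Pauli: the set of qubits where it acts non-trivially. -/
def psupp {n : ℕ} (p : Fin n → Fin 4) : Finset (Fin n) :=
  Finset.univ.filter fun i => p i ≠ 0

/-- Commutator `[A, B] = A*B - B*A`. -/
def cm {α : Type*} [Ring α] (A B : α) : α := A * B - B * A

/-- Frobenius norm of a complex square matrix. -/
def frobNorm {m : Type*} [Fintype m] (M : Matrix m m ℂ) : ℝ :=
  Real.sqrt (∑ x, ∑ y, ‖M x y‖ ^ 2)

/-- Matrix exponential. -/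
def mexp {m : Type*} [Fintype m] [DecidableEq m] (M : Matrix m m ℂ) : Matrix m m ℂ :=
  NormedSpace.exp M

/-- The coefficient of the Pauli `p` in the Pauli expansion `M = Σ_Q c_Q Q`. -/
def pauliCoeff {n : ℕ} (M : QMat n) (p : Fin n → Fin 4) : ℂ :=
  Matrix.trace (M * PauliOp p) / (2 ^ n : ℂ)

/-- The local norm `‖M‖₍₁₎ = max_i Σ_{Q : i ∈ supp(Q)} |c_Q|`. -/
def lonorm {n : ℕ} (M : QMat n) : ℝ :=
  ⨆ i : Fin n, ∑ p : Fin n → Fin 4,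
    if i ∈ psupp p then ‖pauliCoeff M p‖ else 0

/-- The local norm `‖M‖₍₂₎ = max_i (Σ_{Q : i ∈ supp(Q)} |c_Q|²)^{1/2}`. -/
def ltnorm {n : ℕ} (M : QMat n) : ℝ :=
  ⨆ i : Fin n, Real.sqrt (∑ p : Fin n → Fin 4,
    if i ∈ psupp p then ‖pauliCoeff M p‖ ^ 2 else 0)

/-- `H` is the Hamiltonian `Σ_a λ_a E_a` with distinct non-identity Pauli terms. -/
def IsHamiltonian {n m : ℕ} (lam : Fin m → ℝ) (E : Fin m → Fin n → Fin 4) (H : QMat n) : Prop :=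
  Function.Injective E ∧ (∀ a, E a ≠ fun _ => 0) ∧ H = ∑ a, (lam a : ℂ) • PauliOp (E a)

/-- Every term of the Hamiltonian has support of size at most `k`. -/
def KLocal {n m : ℕ} (E : Fin m → Fin n → Fin 4) (k : ℕ) : Prop :=
  ∀ a, (psupp (E a)).card ≤ k

/-- `[P, Q] = 2iX` or `[P, Q] = −2iX` (as matrices). -/
def inCommClass {n : ℕ} (X P Q : Fin n → Fin 4) : Prop :=
  cm (PauliOp P) (PauliOp Q) = ((2 : ℂ) * Complex.I) • PauliOp X ∨
  cm (PauliOp P) (PauliOp Q) = (-((2 : ℂ) * Complex.I)) • PauliOp X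

/-- `𝒮_X`: the pairs `(P,Q) ∈ 𝒫_k × 𝒫_{k'}` with `[P,Q] = ±2iX`. -/
def SX (n k k' : ℕ) (X : Fin n → Fin 4) : Finset ((Fin n → Fin 4) × (Fin n → Fin 4)) :=
  Finset.univ.filter fun PQ =>
    (psupp PQ.1).card ≤ k ∧ (psupp PQ.2).card ≤ k' ∧ inCommClass X PQ.1 PQ.2

/-- The type of the pair `(P,Q)`: `(|supp(P)|, |supp(P) ∩ supp(Q)|)`. -/
def typeOf {n : ℕ} (PQ : (Fin n → Fin 4) × (Fin n → Fin 4)) : ℕ × ℕ :=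
  ((psupp PQ.1).card, (psupp PQ.1 ∩ psupp PQ.2).card)

set_option linter.unreachableTactic false in
set_option linter.unusedTactic false in
def pm : Fin 4 → Fin 4 → Fin 4 :=
  ![![0,1,2,3], ![1,0,3,2], ![2,3,0,1], ![3,2,1,0]]
def ph : Fin 4 → Fin 4 → ℂ :=
  ![![1,1,1,1], ![1,1,Complex.I,-Complex.I], ![1,-Complex.I,1,Complex.I], ![1,Complex.I,-Complex.I,1]]
def sg (a b : Fin 4) : ℂ := if a ≠ 0 ∧ b ≠ 0 ∧ a ≠ b then -1 else 1

set_option linter.unreachableTactic false in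
set_option linter.unusedTactic false in
lemma pauli1_mul (a b : Fin 4) : pauli1 a * pauli1 b = ph a b • pauli1 (pm a b) := by
  fin_cases a <;> fin_cases b <;>
    ext i j <;> fin_cases i <;> fin_cases j <;>
    simp [pauli1, pm, ph, Matrix.mul_apply, Fin.sum_univ_two, Matrix.one_apply, Matrix.vecHead, Matrix.vecTail] <;> ring

lemma pm_comm (a b : Fin 4) : pm a b = pm b a := by revert a b; decide
lemma pm_eq_zero_iff (a b : Fin 4) : pm a b = 0 ↔ a = b := by revert a b; decide
lemma pm_zero_right (a : Fin 4) : pm a 0 = a := by revert a; decide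

lemma ph_ne_zero (a b : Fin 4) : ph a b ≠ 0 := by
  fin_cases a <;> fin_cases b <;> simp [ph, Matrix.vecHead, Matrix.vecTail, Complex.I_ne_zero]
lemma ph_self (a : Fin 4) : ph a a = 1 := by
  fin_cases a <;> simp [ph, Matrix.vecHead, Matrix.vecTail]
lemma ph_symm (a b : Fin 4) : ph b a = sg a b * ph a b := by
  fin_cases a <;> fin_cases b <;> simp [ph, sg, Matrix.vecHead, Matrix.vecTail] <;> ring
lemma sg_mul_self (a b : Fin 4) : sg a b * sg a b = 1 := by
  unfold sg; split <;> norm_num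
lemma sg_eq_one_or (a b : Fin 4) : sg a b = 1 ∨ sg a b = -1 := by
  unfold sg; split <;> simp
lemma sg_eq_neg_one_iff (a b : Fin 4) : sg a b = -1 ↔ (a ≠ 0 ∧ b ≠ 0 ∧ a ≠ b) := by
  unfold sg
  split <;> rename_i hc
  · simp [hc]
  · simp only [hc, iff_false]
    norm_num


lemma PauliOp_mul {n} (P Q : Fin n → Fin 4) :
    PauliOp P * PauliOp Q = (∏ i, ph (P i) (Q i)) • PauliOp (fun i => pm (P i) (Q i)) := by
  ext x y
  simp only [Matrix.mul_apply, PauliOp, Matrix.of_apply, Matrix.smul_apply, smul_eq_mul]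
  calc ∑ z : Fin n → Fin 2, (∏ i, pauli1 (P i) (x i) (z i)) * ∏ i, pauli1 (Q i) (z i) (y i)
      = ∑ z : Fin n → Fin 2, ∏ i, (pauli1 (P i) (x i) (z i) * pauli1 (Q i) (z i) (y i)) := by
        refine Finset.sum_congr rfl fun z _ => ?_
        rw [Finset.prod_mul_distrib]
    _ = ∏ i, ∑ u : Fin 2, pauli1 (P i) (x i) u * pauli1 (Q i) u (y i) := by
        rw [Finset.prod_univ_sum, Fintype.piFinset_univ]
    _ = ∏ i, (ph (P i) (Q i) * pauli1 (pm (P i) (Q i)) (x i) (y i)) := by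
        refine Finset.prod_congr rfl fun i _ => ?_
        have h := pauli1_mul (P i) (Q i)
        have : (pauli1 (P i) * pauli1 (Q i)) (x i) (y i)
            = (ph (P i) (Q i) • pauli1 (pm (P i) (Q i))) (x i) (y i) := by rw [h]
        simpa [Matrix.mul_apply] using this
    _ = (∏ i, ph (P i) (Q i)) * ∏ i, pauli1 (pm (P i) (Q i)) (x i) (y i) :=
        Finset.prod_mul_distrib

lemma trace_pauli1 (a : Fin 4) : Matrix.trace (pauli1 a) = if a = 0 then 2 else 0 := by
  fin_cases a <;> simp [pauli1, Matrix.trace, Fin.sum_univ_two, Matrix.one_apply] <;> norm_num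

lemma trace_PauliOp {n} (R : Fin n → Fin 4) :
    Matrix.trace (PauliOp R) = ∏ i, Matrix.trace (pauli1 (R i)) := by
  simp only [Matrix.trace, Matrix.diag_apply, PauliOp, Matrix.of_apply]
  rw [Finset.prod_univ_sum, Fintype.piFinset_univ]

lemma trace_PauliOp_mul_self {n} (X : Fin n → Fin 4) :
    Matrix.trace (PauliOp X * PauliOp X) = (2:ℂ)^n := by
  rw [PauliOp_mul, Matrix.trace_smul, smul_eq_mul, trace_PauliOp]
  have h1 : ∀ i : Fin n, pm (X i) (X i) = 0 := fun i => (pm_eq_zero_iff _ _).2 rfl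
  simp [h1, trace_pauli1, ph_self, Finset.prod_const]

lemma PauliOp_ne_zero {n} (X : Fin n → Fin 4) : PauliOp X ≠ 0 := by
  intro h0
  have h := trace_PauliOp_mul_self X
  rw [h0] at h
  simp at h
  exact (pow_ne_zero n (two_ne_zero)) h.symm

lemma PauliOp_smul_eq {n} {R X : Fin n → Fin 4} {c d : ℂ} (hd : d ≠ 0)
    (h : c • PauliOp R = d • PauliOp X) : ∀ i, R i = X i := by
  have htr := congrArg (fun M => Matrix.trace (M * PauliOp X)) h
  simp only [Matrix.smul_mul, Matrix.trace_smul, smul_eq_mul] at htr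
  rw [trace_PauliOp_mul_self] at htr
  have h2 : Matrix.trace (PauliOp R * PauliOp X) ≠ 0 := by
    intro hh
    rw [hh, mul_zero] at htr
    exact (mul_ne_zero hd (pow_ne_zero _ two_ne_zero)) htr.symm
  rw [PauliOp_mul, Matrix.trace_smul, smul_eq_mul, trace_PauliOp] at h2
  intro i
  by_contra hne2
  apply h2
  rw [mul_eq_zero]
  right
  refine Finset.prod_eq_zero (Finset.mem_univ i) ?_
  rw [trace_pauli1, if_neg]
  intro hz
  exact hne2 ((pm_eq_zero_iff _ _).1 hz)


lemma two_I_ne_zero : ((2:ℂ) * Complex.I) ≠ 0 := by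
  simp [Complex.I_ne_zero]

lemma extract {n} {X P Q : Fin n → Fin 4} (h : inCommClass X P Q) :
    (∀ i, X i = pm (P i) (Q i)) ∧ (∏ i, sg (P i) (Q i)) = -1 := by
  have hcm : cm (PauliOp P) (PauliOp Q)
      = ((1 - ∏ i, sg (P i) (Q i)) * ∏ i, ph (P i) (Q i)) • PauliOp (fun i => pm (P i) (Q i)) := by
    unfold cm
    rw [PauliOp_mul P Q, PauliOp_mul Q P]
    have h1 : (fun i => pm (Q i) (P i)) = fun i => pm (P i) (Q i) := funext fun i => pm_comm _ _
    rw [h1]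
    have h2 : (∏ i, ph (Q i) (P i)) = (∏ i, sg (P i) (Q i)) * ∏ i, ph (P i) (Q i) := by
      rw [← Finset.prod_mul_distrib]; exact Finset.prod_congr rfl fun i _ => ph_symm _ _
    rw [h2, ← sub_smul]
    congr 1
    ring
  have hsq : (∏ i, sg (P i) (Q i)) * (∏ i, sg (P i) (Q i)) = 1 := by
    rw [← Finset.prod_mul_distrib]
    exact Finset.prod_eq_one fun i _ => sg_mul_self _ _
  rcases mul_self_eq_one_iff.1 hsq with hs | hs
  · exfalso
    rw [hs] at hcm
    simp only [sub_self, zero_mul, zero_smul] at hcm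
    rcases h with h | h <;> rw [hcm] at h <;>
      [skip; skip] <;>
      · have := (smul_eq_zero.1 h.symm)
        rcases this with hc | hM
        · first
          | exact two_I_ne_zero hc
          | exact two_I_ne_zero (neg_eq_zero.1 hc)
        · exact PauliOp_ne_zero X hM
  · have hphne : (∏ i, ph (P i) (Q i)) ≠ 0 :=
      Finset.prod_ne_zero_iff.2 fun i _ => ph_ne_zero _ _
    have key : ∀ i, pm (P i) (Q i) = X i := by
      rw [hs] at hcm
      rcases h with h | h <;> rw [hcm] at h
      · exact PauliOp_smul_eq two_I_ne_zero h
      · exact PauliOp_smul_eq (neg_ne_zero.2 two_I_ne_zero) h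
    exact ⟨fun i => (key i).symm, hs⟩

lemma exists_anticomm {n} {P Q : Fin n → Fin 4} (h : (∏ i, sg (P i) (Q i)) = -1) :
    ∃ i, P i ≠ 0 ∧ Q i ≠ 0 ∧ P i ≠ Q i := by
  by_contra hc
  push_neg at hc
  have hone : (∏ i, sg (P i) (Q i)) = 1 := by
    refine Finset.prod_eq_one fun i _ => ?_
    rcases sg_eq_one_or (P i) (Q i) with h1 | h1
    · exact h1
    · obtain ⟨h0, hq, hne⟩ := (sg_eq_neg_one_iff _ _).1 h1
      exact absurd (hc i h0 hq) hne
  rw [hone] at h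
  norm_num at h


lemma mem_psupp {n} {p : Fin n → Fin 4} {i : Fin n} : i ∈ psupp p ↔ p i ≠ 0 := by
  simp [psupp]

/-- Lemma 3.7: Pauli type counting. -/
theorem pauli_type_counting (n k k' : ℕ) :
    (∀ X : Fin n → Fin 4, ((SX n k k' X).image typeOf).card ≤ k ^ 2) ∧
    (∀ X : Fin n → Fin 4, ∀ P Q P' Q' : Fin n → Fin 4,
      (P, Q) ∈ SX n k k' X → (P', Q') ∈ SX n k k' X → typeOf (P, Q) = typeOf (P', Q') →
      psupp P ∩ psupp Q' ≠ ∅) := by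
  constructor
  · intro X
    have hsub : (SX n k k' X).image typeOf ⊆ (Finset.Icc 1 k) ×ˢ (Finset.Icc 1 k) := by
      intro t ht
      rcases Finset.mem_image.1 ht with ⟨PQ, hmem, rfl⟩
      rw [SX, Finset.mem_filter] at hmem
      obtain ⟨-, hk, hk', hic⟩ := hmem
      obtain ⟨i, h0, h1, h2⟩ := exists_anticomm (extract hic).2
      have hi : i ∈ psupp PQ.1 ∩ psupp PQ.2 :=
        Finset.mem_inter.2 ⟨mem_psupp.2 h0, mem_psupp.2 h1⟩
      have hcardpos : 1 ≤ (psupp PQ.1 ∩ psupp PQ.2).card := Finset.card_pos.2 ⟨i, hi⟩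
      have hle : (psupp PQ.1 ∩ psupp PQ.2).card ≤ (psupp PQ.1).card :=
        Finset.card_le_card Finset.inter_subset_left
      simp only [typeOf, Finset.mem_product, Finset.mem_Icc]
      exact ⟨⟨le_trans hcardpos hle, hk⟩, hcardpos, le_trans hle hk⟩
    calc ((SX n k k' X).image typeOf).card
        ≤ ((Finset.Icc 1 k) ×ˢ (Finset.Icc 1 k)).card := Finset.card_le_card hsub
      _ = k ^ 2 := by rw [Finset.card_product, Nat.card_Icc]; simp [sq]
  · intro X P Q P' Q' hPQ hPQ' htype hdisj
    rw [SX, Finset.mem_filter] at hPQ hPQ'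
    obtain ⟨-, -, -, hic⟩ := hPQ
    obtain ⟨-, -, -, hic'⟩ := hPQ'
    obtain ⟨hX, hsgn⟩ := extract hic
    obtain ⟨hX', -⟩ := extract hic'
    dsimp only at hX hsgn hX'
    simp only [typeOf, Prod.mk.injEq] at htype
    obtain ⟨h1, h2⟩ := htype
    have hdis : ∀ i, i ∈ psupp P → Q' i = 0 := by
      intro i hiP
      by_contra hq
      have : i ∈ psupp P ∩ psupp Q' := Finset.mem_inter.2 ⟨hiP, mem_psupp.2 hq⟩
      rw [hdisj] at this
      exact absurd this (Finset.notMem_empty i)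
    set A := (psupp P ∩ psupp Q).filter (fun i => P i ≠ Q i) with hA
    obtain ⟨i0, hi0a, hi0b, hi0c⟩ := exists_anticomm hsgn
    have hAne : A.Nonempty :=
      ⟨i0, Finset.mem_filter.2 ⟨Finset.mem_inter.2 ⟨mem_psupp.2 hi0a, mem_psupp.2 hi0b⟩, hi0c⟩⟩
    have hkey : ∀ i, i ∈ psupp P → X i ≠ 0 → i ∈ psupp P' := by
      intro i hiP hXne
      have hq' : Q' i = 0 := hdis i hiP
      have hXP : X i = P' i := by rw [hX' i, hq', pm_zero_right]
      exact mem_psupp.2 (hXP ▸ hXne)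
    have hsub1 : (psupp P \ psupp Q) ∪ A ⊆ psupp P' := by
      intro i hi
      rcases Finset.mem_union.1 hi with hi | hi
      · rcases Finset.mem_sdiff.1 hi with ⟨hiP, hiQ⟩
        refine hkey i hiP ?_
        have hq : Q i = 0 := by
          by_contra hq; exact hiQ (mem_psupp.2 hq)
        rw [hX i, hq, pm_zero_right]
        exact mem_psupp.1 hiP
      · rw [hA, Finset.mem_filter, Finset.mem_inter] at hi
        obtain ⟨⟨hiP, hiQ⟩, hne⟩ := hi
        refine hkey i hiP ?_
        rw [hX i]
        intro hz
        exact hne ((pm_eq_zero_iff _ _).1 hz)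
    have hd1 : Disjoint (psupp P \ psupp Q) A := by
      rw [Finset.disjoint_left]
      intro i hi hiA
      rw [hA, Finset.mem_filter, Finset.mem_inter] at hiA
      exact (Finset.mem_sdiff.1 hi).2 hiA.1.2
    have hd2 : Disjoint ((psupp P \ psupp Q) ∪ A) (psupp P' ∩ psupp Q') := by
      rw [Finset.disjoint_left]
      intro i hi hi2
      have hiP : i ∈ psupp P := by
        rcases Finset.mem_union.1 hi with hi | hi
        · exact (Finset.mem_sdiff.1 hi).1
        · exact (Finset.mem_inter.1 (Finset.mem_filter.1 hi).1).1
      have hq' : Q' i = 0 := hdis i hiP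
      have : Q' i ≠ 0 := mem_psupp.1 (Finset.mem_inter.1 hi2).2
      exact this hq'
    have hsub : ((psupp P \ psupp Q) ∪ A) ∪ (psupp P' ∩ psupp Q') ⊆ psupp P' :=
      Finset.union_subset hsub1 Finset.inter_subset_left
    have hcard : (psupp P \ psupp Q).card + A.card + (psupp P' ∩ psupp Q').card
        ≤ (psupp P').card := by
      calc (psupp P \ psupp Q).card + A.card + (psupp P' ∩ psupp Q').card
          = (((psupp P \ psupp Q) ∪ A) ∪ (psupp P' ∩ psupp Q')).card := by
            rw [Finset.card_union_of_disjoint hd2, Finset.card_union_of_disjoint hd1]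
        _ ≤ _ := Finset.card_le_card hsub
    have hsum : (psupp P \ psupp Q).card + (psupp P ∩ psupp Q).card = (psupp P).card :=
      Finset.card_sdiff_add_card_inter _ _
    have hApos : 0 < A.card := Finset.card_pos.2 hAne
    omega
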